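/- Let G be a finite simple graph with an odd number of vertices and let e = uv be an edge of G that is contained in every odd matching of G. Then G is reconfigurable if and only if the graph G − u − v obtained by deleting both vertices u and v is reconfigurable. -/

import Mathlib

/-- A vertex `v` is covered by the matching `M` if some edge of `M` contains it. -/
def Covers {V : Type*} (M : Set (Sym2 V)) (v : V) : Prop := ∃ e ∈ M, v ∈ e

/-- `M` is a matching of `G`: a set of edges of `G`, no two of which share a vertex. -/
def IsMatchingOn {V : Type*} (G : SimpleGraph V) (M : Set (Sym2 V)) : Prop :=
  M ⊆ G.edgeSet ∧ ∀ e ∈ M, ∀ f ∈ M, e ≠ f → ∀ v : V, v ∈ e → v ∉ f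

/-- `M` is an odd matching of `G`: a matching such that exactly one vertex is uncovered. -/
def IsOddMatching {V : Type*} (G : SimpleGraph V) (M : Set (Sym2 V)) : Prop :=
  IsMatchingOn G M ∧ ∃! v : V, ¬ Covers M v

/-- A flip transforms the odd matching `M` with isolated vertex `u` into
`M' = (M \ {vw}) ∪ {uv}`, where `uv` is an edge of `G` and `vw` is an edge of `M`. -/
def Flip {V : Type*} (G : SimpleGraph V) (M M' : Set (Sym2 V)) : Prop :=
  IsOddMatching G M ∧
  ∃ u v w : V, ¬ Covers M u ∧ s(u, v) ∈ G.edgeSet ∧ s(v, w) ∈ M ∧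
    M' = (M \ {s(v, w)}) ∪ {s(u, v)}

/-- `M` can be reconfigured to `M'` by some finite sequence of flips. -/
def Reconfig {V : Type*} (G : SimpleGraph V) (M M' : Set (Sym2 V)) : Prop :=
  Relation.ReflTransGen (Flip G) M M'

/-- `G` is reconfigurable: every odd matching can be reconfigured to every other one. -/
def Reconfigurable {V : Type*} (G : SimpleGraph V) : Prop :=
  ∀ M M' : Set (Sym2 V), IsOddMatching G M → IsOddMatching G M' → Reconfig G M M'

/-- `M` can be transformed into `M'` by a flip sequence of length exactly `k`. -/
def FlipSeq {V : Type*} (G : SimpleGraph V) (M M' : Set (Sym2 V)) (k : ℕ) : Prop :=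
  ∃ f : ℕ → Set (Sym2 V), f 0 = M ∧ f k = M' ∧ ∀ i < k, Flip G (f i) (f (i + 1))

/-- The graph obtained from `G` by deleting the vertex set `s` has a perfect matching:
a matching of `G` avoiding the vertices of `s` and covering all other vertices. -/
def HasPerfectMatchingAvoiding {V : Type*} (G : SimpleGraph V) (s : Set V) : Prop :=
  ∃ M : Set (Sym2 V), IsMatchingOn G M ∧ (∀ e ∈ M, ∀ v : V, v ∈ e → v ∉ s) ∧
    ∀ v : V, v ∉ s → Covers M v

namespace Stmt3Aux

variable {V : Type*}

lemma mem_lift {s : Set V} {e : Sym2 s} {w : V} (hw : w ∈ Sym2.map Subtype.val e) : w ∈ s := by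
  obtain ⟨a, -, rfl⟩ := Sym2.mem_map.mp hw; exact a.2

lemma lift_inj {s : Set V} : Function.Injective (Sym2.map (Subtype.val : s → V)) :=
  Sym2.map.injective Subtype.val_injective

lemma mem_lift_iff {s : Set V} {e : Sym2 s} {w : s} :
    (w : V) ∈ Sym2.map Subtype.val e ↔ w ∈ e := by
  constructor
  · intro h
    obtain ⟨a, ha, hav⟩ := Sym2.mem_map.mp h
    exact Subtype.val_injective hav ▸ ha
  · intro h; exact Sym2.mem_map.mpr ⟨w, h, rfl⟩

lemma lift_edge {s : Set V} {G : SimpleGraph V} {e : Sym2 s} :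
    e ∈ (G.induce s).edgeSet ↔ Sym2.map Subtype.val e ∈ G.edgeSet := by
  refine Sym2.inductionOn e ?_
  intro a b
  simp [SimpleGraph.mem_edgeSet]

lemma flip_odd {G : SimpleGraph V} {M M' : Set (Sym2 V)} (h : Flip G M M') :
    IsOddMatching G M' := by
  obtain ⟨⟨⟨hsub, hdisj⟩, x0, hx0, huniq⟩, x, y, z, hxM, hxy, hyz, rfl⟩ := h
  have hxy' : x ≠ y := ((SimpleGraph.mem_edgeSet G).mp hxy).ne
  have hyz' : y ≠ z := ((SimpleGraph.mem_edgeSet G).mp (hsub hyz)).ne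
  have hxz : x ≠ z := by
    intro h; exact hxM ⟨s(y,z), hyz, h ▸ Sym2.mem_mk_right y z⟩
  have hcov : ∀ w : V, w ≠ x → Covers M w := by
    intro w hw
    by_contra hc
    exact hw ((huniq w hc).trans (huniq x hxM).symm)
  constructor
  · constructor
    · rintro e (⟨heM, -⟩ | rfl)
      · exact hsub heM
      · exact hxy
    · rintro e (⟨heM, hene⟩ | rfl) f (⟨hfM, hfne⟩ | rfl) hef w hwe
      · exact hdisj e heM f hfM hef w hwe
      · rw [Sym2.mem_iff]
        rintro (h | h)
        · exact hxM ⟨e, heM, h ▸ hwe⟩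
        · exact hdisj s(y,z) hyz e heM (Ne.symm hene) y (Sym2.mem_mk_left y z) (h ▸ hwe)
      · rw [Sym2.mem_iff] at hwe
        intro hwf
        rcases hwe with h | h
        · exact hxM ⟨f, hfM, h ▸ hwf⟩
        · exact hdisj s(y,z) hyz f hfM (Ne.symm hfne) y (Sym2.mem_mk_left y z) (h ▸ hwf)
      · exact absurd rfl hef
  · refine ⟨z, ?_, ?_⟩
    · rintro ⟨f, (⟨hfM, hfne⟩ | rfl), hzf⟩
      · exact hdisj s(y,z) hyz f hfM (Ne.symm hfne) z (Sym2.mem_mk_right y z) hzf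
      · rw [Sym2.mem_iff] at hzf
        rcases hzf with h | h
        · exact hxz h.symm
        · exact hyz' h.symm
    · intro w hw
      by_contra hwz
      have hwx : w ≠ x := by
        intro h
        exact hw ⟨s(x,y), Or.inr rfl, h ▸ Sym2.mem_mk_left x y⟩
      obtain ⟨f, hfM, hwf⟩ := hcov w hwx
      by_cases hf : f = s(y,z)
      · subst hf
        rw [Sym2.mem_iff] at hwf
        rcases hwf with h | h
        · exact hw ⟨s(x,y), Or.inr rfl, h ▸ Sym2.mem_mk_right x y⟩
        · exact hwz h
      · exact hw ⟨f, Or.inl ⟨hfM, hf⟩, hwf⟩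

end Stmt3Aux

namespace Stmt3Aux

variable {V : Type*}

lemma exists_lift {s : Set V} (f : Sym2 V) :
    ∀ _ : (∀ w ∈ f, w ∈ s), ∃ e : Sym2 s, Sym2.map Subtype.val e = f := by
  refine Sym2.inductionOn f ?_
  intro a b h
  exact ⟨s(⟨a, h a (Sym2.mem_mk_left a b)⟩, ⟨b, h b (Sym2.mem_mk_right a b)⟩), rfl⟩

lemma lift_ne {u v : V} (e : Sym2 ({u,v}ᶜ : Set V)) : Sym2.map Subtype.val e ≠ s(u, v) := by
  intro h
  have hu : u ∈ Sym2.map Subtype.val e := h ▸ Sym2.mem_mk_left u v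
  have := mem_lift hu
  simp at this

def dn (u v : V) (M : Set (Sym2 V)) : Set (Sym2 ({u,v}ᶜ : Set V)) :=
  {e | Sym2.map Subtype.val e ∈ M}

def up (u v : V) (N : Set (Sym2 ({u,v}ᶜ : Set V))) : Set (Sym2 V) :=
  (Sym2.map Subtype.val '' N) ∪ {s(u,v)}

lemma dn_up (u v : V) (N : Set (Sym2 ({u,v}ᶜ : Set V))) : dn u v (up u v N) = N := by
  ext e
  constructor
  · rintro (⟨e', he', hee⟩ | h)
    · exact lift_inj hee ▸ he'
    · exact absurd h (lift_ne e)
  · intro h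
    exact Or.inl (Set.mem_image_of_mem _ h)

section

variable {G : SimpleGraph V} {u v : V}

lemma avoid {M : Set (Sym2 V)} (hM : IsOddMatching G M) (huvM : s(u,v) ∈ M)
    {f : Sym2 V} (hfM : f ∈ M) (hne : f ≠ s(u,v)) : ∀ w ∈ f, w ∈ ({u,v}ᶜ : Set V) := by
  intro w hw
  have := hM.1.2 f hfM s(u,v) huvM hne w hw
  rw [Sym2.mem_iff] at this
  simp only [Set.mem_compl_iff, Set.mem_insert_iff, Set.mem_singleton_iff]
  tauto

lemma up_dn {M : Set (Sym2 V)} (hM : IsOddMatching G M) (huvM : s(u,v) ∈ M) :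
    up u v (dn u v M) = M := by
  ext f
  constructor
  · rintro (⟨e', he', rfl⟩ | h)
    · exact he'
    · exact h ▸ huvM
  · intro hfM
    by_cases hne : f = s(u,v)
    · exact Or.inr hne
    · obtain ⟨e, he⟩ := exists_lift f (avoid hM huvM hfM hne)
      exact Or.inl ⟨e, show Sym2.map Subtype.val e ∈ M from he ▸ hfM, he⟩

lemma dn_not_covers {M : Set (Sym2 V)} {w : V} (h : ¬ Covers M w) (hw : w ∈ ({u,v}ᶜ : Set V)) :
    ¬ Covers (dn u v M) ⟨w, hw⟩ := by
  rintro ⟨e, he, hm⟩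
  exact h ⟨Sym2.map Subtype.val e, he, mem_lift_iff.mpr hm⟩

lemma up_not_covers {N : Set (Sym2 ({u,v}ᶜ : Set V))} {w : ({u,v}ᶜ : Set V)}
    (h : ¬ Covers N w) : ¬ Covers (up u v N) (w : V) := by
  rintro ⟨f, (⟨e, he, rfl⟩ | hf), hm⟩
  · exact h ⟨e, he, mem_lift_iff.mp hm⟩
  · have := hf ▸ hm
    rw [Sym2.mem_iff] at this
    have h2 := w.2
    simp only [Set.mem_compl_iff, Set.mem_insert_iff, Set.mem_singleton_iff] at h2
    tauto

lemma dn_odd {M : Set (Sym2 V)} (hM : IsOddMatching G M) (huvM : s(u,v) ∈ M) :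
    IsOddMatching (G.induce ({u,v}ᶜ : Set V)) (dn u v M) := by
  obtain ⟨⟨hsub, hdisj⟩, x0, hx0, huniq⟩ := hM
  have hx0S : x0 ∈ ({u,v}ᶜ : Set V) := by
    simp only [Set.mem_compl_iff, Set.mem_insert_iff, Set.mem_singleton_iff]
    rw [not_or]
    constructor
    · intro h; exact hx0 ⟨s(u,v), huvM, h ▸ Sym2.mem_mk_left u v⟩
    · intro h; exact hx0 ⟨s(u,v), huvM, h ▸ Sym2.mem_mk_right u v⟩
  refine ⟨⟨fun e he => lift_edge.mpr (hsub he), ?_⟩, ⟨x0, hx0S⟩, dn_not_covers hx0 hx0S, ?_⟩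
  · intro e he f hf hef w hwe hwf
    exact hdisj _ he _ hf (fun h => hef (lift_inj h)) (w : V)
      (mem_lift_iff.mpr hwe) (mem_lift_iff.mpr hwf)
  · intro y hy
    have : ¬ Covers M (y : V) := by
      rintro ⟨f, hfM, hyf⟩
      have hfne : f ≠ s(u,v) := by
        rintro rfl
        rw [Sym2.mem_iff] at hyf
        have h2 := y.2
        simp only [Set.mem_compl_iff, Set.mem_insert_iff, Set.mem_singleton_iff] at h2
        tauto
      obtain ⟨e, he⟩ := exists_lift f (avoid ⟨⟨hsub, hdisj⟩, x0, hx0, huniq⟩ huvM hfM hfne)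
      exact hy ⟨e, show Sym2.map Subtype.val e ∈ M from he ▸ hfM, mem_lift_iff.mp (he ▸ hyf)⟩
    exact Subtype.ext (huniq _ this)

lemma up_odd (huv : G.Adj u v) {N : Set (Sym2 ({u,v}ᶜ : Set V))}
    (hN : IsOddMatching (G.induce ({u,v}ᶜ : Set V)) N) : IsOddMatching G (up u v N) := by
  obtain ⟨⟨hsub, hdisj⟩, x0, hx0, huniq⟩ := hN
  refine ⟨⟨?_, ?_⟩, (x0 : V), up_not_covers hx0, ?_⟩
  · rintro f (⟨e, he, rfl⟩ | hf)
    · exact lift_edge.mp (hsub he)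
    · exact hf ▸ (SimpleGraph.mem_edgeSet G).mpr huv
  · have key : ∀ e ∈ N, ∀ w : V, w ∈ Sym2.map Subtype.val e → w ∉ s(u,v) := by
      intro e _ w hw hwu
      have h2 := mem_lift hw
      rw [Sym2.mem_iff] at hwu
      simp only [Set.mem_compl_iff, Set.mem_insert_iff, Set.mem_singleton_iff] at h2
      tauto
    rintro f (⟨e, he, rfl⟩ | hf) g (⟨e', he', rfl⟩ | hg) hfg w hwf hwg
    · obtain ⟨a, ha, rfl⟩ := Sym2.mem_map.mp hwf
      exact hdisj e he e' he' (fun h => hfg (h ▸ rfl)) a ha (mem_lift_iff.mp hwg)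
    · exact key e he w hwf (hg ▸ hwg)
    · exact key e' he' w hwg (hf ▸ hwf)
    · exact hfg (hf.trans hg.symm)
  · intro w hw
    have hwS : w ∈ ({u,v}ᶜ : Set V) := by
      simp only [Set.mem_compl_iff, Set.mem_insert_iff, Set.mem_singleton_iff]
      rw [not_or]
      constructor
      · intro h; exact hw ⟨s(u,v), Or.inr rfl, h ▸ Sym2.mem_mk_left u v⟩
      · intro h; exact hw ⟨s(u,v), Or.inr rfl, h ▸ Sym2.mem_mk_right u v⟩
    have : ¬ Covers N ⟨w, hwS⟩ := by
      rintro ⟨e, he, hm⟩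
      exact hw ⟨Sym2.map Subtype.val e, Or.inl (Set.mem_image_of_mem _ he),
        mem_lift_iff.mpr hm⟩
    exact congrArg Subtype.val (huniq _ this)

end

end Stmt3Aux

namespace Stmt3Aux

variable {V : Type*} {G : SimpleGraph V} {u v : V}

lemma flip_dn (he : ∀ M : Set (Sym2 V), IsOddMatching G M → s(u, v) ∈ M)
    {M M' : Set (Sym2 V)} (h : Flip G M M') :
    Flip (G.induce ({u,v}ᶜ : Set V)) (dn u v M) (dn u v M') := by
  obtain ⟨hM, x, y, z, hx, hxy, hyz, hM'⟩ := h
  have huvM := he M hM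
  have hM'odd : IsOddMatching G M' := flip_odd ⟨hM, x, y, z, hx, hxy, hyz, hM'⟩
  subst hM'
  have hyzne : s(y,z) ≠ s(u,v) := by
    intro hEq
    have huvM' := he _ hM'odd
    rcases huvM' with ⟨-, hne⟩ | hx2
    · exact hne hEq.symm
    · rw [Set.mem_singleton_iff] at hx2
      have hxmem : x ∈ s(y,z) := by rw [hEq, hx2]; exact Sym2.mem_mk_left x y
      exact hx ⟨s(y,z), hyz, hxmem⟩
  have hxS : x ∈ ({u,v}ᶜ : Set V) := by
    simp only [Set.mem_compl_iff, Set.mem_insert_iff, Set.mem_singleton_iff]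
    rw [not_or]
    constructor
    · intro hh; exact hx ⟨s(u,v), huvM, hh ▸ Sym2.mem_mk_left u v⟩
    · intro hh; exact hx ⟨s(u,v), huvM, hh ▸ Sym2.mem_mk_right u v⟩
  have hyS : y ∈ ({u,v}ᶜ : Set V) := avoid hM huvM hyz hyzne y (Sym2.mem_mk_left y z)
  have hzS : z ∈ ({u,v}ᶜ : Set V) := avoid hM huvM hyz hyzne z (Sym2.mem_mk_right y z)
  refine ⟨dn_odd hM huvM, ⟨x,hxS⟩, ⟨y,hyS⟩, ⟨z,hzS⟩, dn_not_covers hx hxS,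
    lift_edge.mpr hxy, hyz, ?_⟩
  ext e
  constructor
  · rintro (⟨h1, h2⟩ | h3)
    · exact Or.inl ⟨h1, fun hh => h2 (show Sym2.map Subtype.val e = s(y,z) by rw [(hh : e = _)]; exact Sym2.map_pair_eq _ _ _)⟩
    · exact Or.inr (lift_inj (h3 : Sym2.map Subtype.val e = s(x,y)))
  · rintro (⟨h1, h2⟩ | h3)
    · exact Or.inl ⟨h1, fun hh => h2 (lift_inj (hh : Sym2.map Subtype.val e = s(y,z)))⟩
    · exact Or.inr (show Sym2.map Subtype.val e = s(x,y) by rw [(h3 : e = _)]; exact Sym2.map_pair_eq _ _ _)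

lemma flip_up (huv : G.Adj u v) {N N' : Set (Sym2 ({u,v}ᶜ : Set V))}
    (h : Flip (G.induce ({u,v}ᶜ : Set V)) N N') : Flip G (up u v N) (up u v N') := by
  obtain ⟨hN, a, b, c, ha, hab, hbc, hN'⟩ := h
  subst hN'
  refine ⟨up_odd huv hN, (a:V), (b:V), (c:V), up_not_covers ha, lift_edge.mp hab,
    Or.inl ⟨s(b,c), hbc, rfl⟩, ?_⟩
  ext f
  constructor
  · rintro (⟨e, (⟨heN, hene⟩ | he2), rfl⟩ | hf)
    · exact Or.inl ⟨Or.inl ⟨e, heN, rfl⟩,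
        fun hh => hene (lift_inj (hh : Sym2.map Subtype.val e = _))⟩
    · exact Or.inr (show Sym2.map Subtype.val e = _ by rw [(he2 : e = _)]; exact Sym2.map_pair_eq _ _ _)
    · exact Or.inl ⟨Or.inr hf,
        fun hh => lift_ne s(b,c) ((hh : f = _).symm.trans (hf : f = _))⟩
  · rintro (⟨(⟨e, heN, rfl⟩ | hfu), hne⟩ | hf)
    · exact Or.inl ⟨e, Or.inl ⟨heN,
        fun hh => hne (show Sym2.map Subtype.val e = _ by rw [(hh : e = _)]; exact Sym2.map_pair_eq _ _ _)⟩, rfl⟩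
    · exact Or.inr hfu
    · exact Or.inl ⟨s(a,b), Or.inr rfl, ((hf : f = _) ▸ rfl)⟩

end Stmt3Aux

open Stmt3Aux

/-- If the edge `e = uv` of `G` (a finite simple graph of odd order) is contained in
every odd matching of `G`, then `G` is reconfigurable iff `G - u - v` is reconfigurable. -/
theorem stmt3 {V : Type*} [Fintype V] (G : SimpleGraph V)
    (hodd : Odd (Fintype.card V)) (u v : V) (huv : G.Adj u v)
    (he : ∀ M : Set (Sym2 V), IsOddMatching G M → s(u, v) ∈ M) :
    Reconfigurable G ↔ Reconfigurable (G.induce ({u, v}ᶜ : Set V)) := by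
  constructor
  · intro h N N' hN hN'
    have h2 := h (up u v N) (up u v N') (up_odd huv hN) (up_odd huv hN')
    have h3 : Relation.ReflTransGen (Flip (G.induce ({u,v}ᶜ : Set V))) (dn u v (up u v N)) (dn u v (up u v N')) := Relation.ReflTransGen.lift (dn u v) (fun a b hab => flip_dn he hab) _ _ h2
    rwa [dn_up, dn_up] at h3
  · intro h M M' hM hM'
    have h2 := h (dn u v M) (dn u v M') (dn_odd hM (he M hM)) (dn_odd hM' (he M' hM'))
    have h3 : Relation.ReflTransGen (Flip G) (up u v (dn u v M)) (up u v (dn u v M')) := Relation.ReflTransGen.lift (up u v) (fun a b hab => flip_up huv hab) _ _ h2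
    rwa [up_dn hM (he M hM), up_dn hM' (he M' hM')] at h3
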